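/- Let φ : ℝᵈ → ℝ be convex, let p be a point on the sphere of radius r where φ attains its maximum M over the closed ball B_r, and let H be the hyperplane through p with normal p/‖p‖. Then φ(z) ≥ M for every z in the affine hyperplane p + H⊥-translate, i.e., for every z with ⟪z, p⟫ = ‖p‖² (z on the tangent hyperplane at p). -/

import Mathlib

open scoped RealInnerProductSpace

set_option maxHeartbeats 4000000

theorem convex_ge_max_on_tangent_hyperplane (d : ℕ)
    (φ : EuclideanSpace ℝ (Fin d) → ℝ) (r : ℝ) (p : EuclideanSpace ℝ (Fin d))
    (hconv : ConvexOn ℝ Set.univ φ) (hr : 0 < r) (hp : ‖p‖ = r)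
    (hmax : ∀ x ∈ Metric.closedBall (0 : EuclideanSpace ℝ (Fin d)) r, φ x ≤ φ p) :
    ∀ z : EuclideanSpace ℝ (Fin d), ⟪z, p⟫ = r ^ 2 → φ z ≥ φ p := by
  intro z hz
  set M := φ p with hM
  by_cases hzp : z = p
  · simp [hzp, hM]
  set w := z - p with hw
  have hzpw : z = p + w := by rw [hw]; abel
  have hwp : ⟪w, p⟫ = 0 := by
    rw [hw, inner_sub_left, hz, real_inner_self_eq_norm_sq, hp]
    ring
  set K := ‖w‖ with hK
  have hK0 : 0 < K := by
    rw [hK, norm_pos_iff, hw, sub_ne_zero]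
    exact hzp
  clear_value K
  -- φ(2p) ≥ M
  have hφ0 : φ 0 ≤ M := hmax 0 (by simp [hr.le])
  have h2p : M ≤ φ ((2:ℝ) • p) := by
    have hcomb : ((1:ℝ)/2) • (0 : EuclideanSpace ℝ (Fin d)) + ((1:ℝ)/2) • ((2:ℝ) • p) = p := by
      module
    have := hconv.2 (Set.mem_univ (0 : EuclideanSpace ℝ (Fin d)))
      (Set.mem_univ ((2:ℝ) • p)) (by norm_num : (0:ℝ) ≤ 1/2) (by norm_num : (0:ℝ) ≤ 1/2)
      (by norm_num)
    rw [hcomb] at this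
    simp only [smul_eq_mul] at this
    linarith
  set C := φ ((2:ℝ) • p) - M with hC
  have hC0 : 0 ≤ C := by rw [hC]; linarith
  clear_value M C
  -- key estimate for every t > 0
  have key : ∀ t : ℝ, 0 < t → M ≤ φ z + C * (t * K^2 / (2 * r^2)) := by
    intro t ht
    set A := r^2 + t^2 * K^2 with hA
    have hApos : 0 < A := by positivity
    set sA := Real.sqrt A with hsA
    have hsA2 : sA^2 = A := Real.sq_sqrt hApos.le
    have hsApos : 0 < sA := Real.sqrt_pos.2 hApos
    have hrsA : r ≤ sA := by nlinarith [sq_nonneg (sA - r), sq_nonneg (sA + r)]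
    have hnormsq : ‖p - t • w‖^2 = A := by
      rw [norm_sub_sq_real, inner_smul_right, real_inner_comm, hwp, norm_smul, hp]
      rw [Real.norm_eq_abs, abs_of_pos ht, hA, hK]
      ring
    have hnorm : ‖p - t • w‖ = sA := by
      rw [hsA, ← hnormsq, Real.sqrt_sq (norm_nonneg _)]
    set μ := r / sA with hμ
    have hμ0 : 0 < μ := div_pos hr hsApos
    have hμ1 : μ ≤ 1 := (div_le_one hsApos).2 hrsA
    set a := μ • (p - t • w) with ha
    have hanorm : ‖a‖ = r := by
      rw [ha, norm_smul, hnorm, Real.norm_eq_abs, abs_of_pos hμ0, hμ]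
      field_simp
    have haM : φ a ≤ M := hmax a (by
      rw [Metric.mem_closedBall, dist_zero_right, hanorm])
    have hden : 0 < 1 + μ * t := by positivity
    set θ := 1 / (1 + μ * t) with hθ
    have hθ0 : 0 < θ := by positivity
    have hθ1 : θ < 1 := by
      rw [hθ, div_lt_one hden]; nlinarith
    set l := μ * (1 + t) / (1 + μ * t) with hl
    have hl0 : 0 ≤ l := by positivity
    have hl1 : l ≤ 1 := by
      rw [hl, div_le_one hden]; nlinarith
    clear_value A sA μ θ l a
    have hcomb : (1 - θ) • z + θ • a = l • p := by
      rw [ha, hl, hθ, hzpw]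
      match_scalars <;> field_simp <;> try ring
    have hcvx : φ (l • p) ≤ (1 - θ) * φ z + θ * φ a := by
      have := hconv.2 (Set.mem_univ z) (Set.mem_univ a)
        (by linarith : (0:ℝ) ≤ 1 - θ) hθ0.le (by ring)
      rwa [hcomb] at this
    -- slope bound: M - φ(l•p) ≤ (1-l) * C
    have hslope : M - φ (l • p) ≤ (1 - l) * C := by
      have h2l : 0 < 2 - l := by linarith
      have hα : (1/(2-l)) • (l • p) + ((1-l)/(2-l)) • ((2:ℝ) • p) = p := by
        match_scalars <;> field_simp <;> try ring
      have hb1 : (0:ℝ) ≤ 1/(2-l) := by positivity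
      have hb2 : (0:ℝ) ≤ (1-l)/(2-l) := div_nonneg (by linarith) (by linarith)
      have hb3 : 1/(2-l) + (1-l)/(2-l) = 1 := by
        rw [← add_div, div_eq_one_iff_eq (ne_of_gt h2l)]
        try ring
      have h1 := hconv.2 (Set.mem_univ (l • p)) (Set.mem_univ ((2:ℝ) • p)) hb1 hb2 hb3
      rw [hα] at h1
      simp only [smul_eq_mul] at h1
      have h2 : M * (2 - l) ≤ φ (l • p) + (1 - l) * φ ((2:ℝ) • p) := by
        have e : 1/(2-l) * φ (l • p) + (1-l)/(2-l) * φ ((2:ℝ) • p)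
            = (φ (l • p) + (1 - l) * φ ((2:ℝ) • p)) / (2 - l) := by
          field_simp
          try ring
        rw [e, le_div_iff₀ h2l] at h1
        rw [← hM] at h1
        linarith [h1]
      rw [hC]
      nlinarith [h2]
    -- ratio bound
    have h2r : (sA - r) * (2 * r) ≤ t^2 * K^2 := by
      nlinarith [hsA2, sq_nonneg (sA - r)]
    have hratio : (1 - l) ≤ (1 - θ) * (t * K^2 / (2 * r^2)) := by
      have hsne : sA ≠ 0 := ne_of_gt hsApos
      have hrne : r ≠ 0 := ne_of_gt hr
      have hD : (0:ℝ) < sA + r * t := by positivity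
      rw [hl, hθ, hμ]
      have e1 : 1 - r/sA*(1+t)/(1+r/sA*t) = (sA - r)/(sA + r*t) := by
        field_simp
        try ring
      have e2 : (1 - 1/(1+r/sA*t)) * (t * K^2 / (2 * r^2))
          = (r*t*(t * K^2 / (2 * r^2)))/(sA + r*t) := by
        field_simp
        try ring
      rw [e1, e2, div_le_div_iff₀ hD hD]
      have hnum : sA - r ≤ r*t*(t*K^2/(2*r^2)) := by
        have e3 : r*t*(t*K^2/(2*r^2)) = t^2*K^2/(2*r) := by
          field_simp
          try ring
        rw [e3, le_div_iff₀ (by positivity : (0:ℝ) < 2*r)]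
        linarith [h2r]
      nlinarith [hnum, hD]
    -- combine
    have hCB : (1 - l) * C ≤ (1 - θ) * (t * K^2 / (2 * r^2)) * C :=
      mul_le_mul_of_nonneg_right hratio hC0
    have hfz : (1 - θ) * φ z ≥ (1 - θ) * M - (1 - θ) * (t * K^2 / (2 * r^2)) * C := by
      nlinarith [hcvx, haM, hslope, hθ0, hCB]
    have hpos : 0 < 1 - θ := by linarith
    have h5 : M - C * (t * K^2 / (2 * r^2)) ≤ φ z := by
      have h6 : (1 - θ) * (M - C * (t * K^2 / (2 * r^2))) ≤ (1 - θ) * φ z := by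
        nlinarith [hfz]
      exact le_of_mul_le_mul_left h6 hpos
    linarith
  -- let t → 0
  have final : ∀ ε > 0, M ≤ φ z + ε := by
    intro ε hε
    have hq : 0 < C * K^2 + 1 := by positivity
    set t := ε * r^2 / (C * K^2 + 1) with htdef
    have ht : 0 < t := by positivity
    have h1 := key t ht
    have h2 : C * (t * K^2 / (2 * r^2)) ≤ ε := by
      rw [htdef]
      have : C * (ε * r^2 / (C * K^2 + 1) * K^2 / (2 * r^2)) = ε * (C * K^2) / (2 * (C * K^2 + 1)) := by
        field_simp
      rw [this]
      rw [div_le_iff₀ (by positivity : (0:ℝ) < 2 * (C * K^2 + 1))]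
      nlinarith [mul_nonneg hC0 (sq_nonneg K), hε]
    linarith
  exact le_of_forall_pos_le_add final
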